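/- Let f, h ∈ L²((0,1)ⁿ) with Cov(f,h) ≥ 0, and g = f + h. Then S^g_{T,x_i} ≤ 2·max{S^f_{T,x_i}, S^h_{T,x_i}}, and the constant 2 cannot be improved. -/

import Mathlib

open MeasureTheory

noncomputable section SobolDefs

/-- Uniform probability measure on the open unit cube `(0,1)^n`. -/
def uCube (n : ℕ) : Measure (Fin n → ℝ) :=
  Measure.pi fun _ => volume.restrict (Set.Ioo 0 1)

/-- Mean value of `f`. -/
def mval {α : Type*} [MeasurableSpace α] (μ : Measure α) (f : α → ℝ) : ℝ := ∫ x, f x ∂μ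

/-- Integral of the square of `f`. -/
def intSq {α : Type*} [MeasurableSpace α] (μ : Measure α) (f : α → ℝ) : ℝ := ∫ x, (f x) ^ 2 ∂μ

/-- Variance of `f`. -/
def var' {α : Type*} [MeasurableSpace α] (μ : Measure α) (f : α → ℝ) : ℝ := intSq μ f - (mval μ f) ^ 2

/-- Covariance of `f` and `h`. -/
def cov' {α : Type*} [MeasurableSpace α] (μ : Measure α) (f h : α → ℝ) : ℝ :=
  (∫ x, f x * h x ∂μ) - mval μ f * mval μ h

/-- Conditional mean of `f` obtained by integrating out the coordinate encoded
by the update map `upd` over `(0,1)`. -/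
def cMean {α : Type*} [MeasurableSpace α] (upd : α → ℝ → α) (f : α → ℝ) (x : α) : ℝ :=
  ∫ t in Set.Ioo (0 : ℝ) 1, f (upd x t)

/-- Total-effect variance of the coordinate encoded by `upd`. -/
def tVar {α : Type*} [MeasurableSpace α] (μ : Measure α) (upd : α → ℝ → α) (f : α → ℝ) : ℝ :=
  intSq μ f - ∫ x, (cMean upd f x) ^ 2 ∂μ

/-- Total Sobol sensitivity index of the coordinate encoded by `upd`. -/
def sobolT {α : Type*} [MeasurableSpace α] (μ : Measure α) (upd : α → ℝ → α) (f : α → ℝ) : ℝ :=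
  tVar μ upd f / var' μ f

/-- Updating the `i`-th coordinate of a point of the cube. -/
def updC {n : ℕ} (i : Fin n) : (Fin n → ℝ) → ℝ → (Fin n → ℝ) :=
  fun x t => Function.update x i t

/-- Updating the `i`-th coordinate of the first component of a product point. -/
def updF {n : ℕ} {β : Type*} (i : Fin n) : ((Fin n → ℝ) × β) → ℝ → ((Fin n → ℝ) × β) :=
  fun p t => (Function.update p.1 i t, p.2)

end SobolDefs


noncomputable section AuxPrel

def nu : Measure ℝ := volume.restrict (Set.Ioo 0 1)

instance : IsProbabilityMeasure nu := ⟨by simp [nu, Real.volume_Ioo]⟩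

lemma uCube_eq (n : ℕ) : uCube n = Measure.pi fun _ => nu := rfl

instance (n : ℕ) : IsProbabilityMeasure (uCube n) := by
  rw [uCube_eq]; infer_instance

end AuxPrel
noncomputable section AuxA

section ProbLemmas

variable {α : Type*} [MeasurableSpace α] {ν : Measure α} [IsProbabilityMeasure ν]

lemma integrable_center_sq {a : α → ℝ} (C : ℝ)
    (ha1 : Integrable a ν) (ha2 : Integrable (fun t => a t ^ 2) ν) :
    Integrable (fun t => (a t - C) ^ 2) ν := by
  have : (fun t => (a t - C) ^ 2) = fun t => a t ^ 2 - (2 * C) * a t + C ^ 2 :=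
    funext fun t => by ring
  rw [this]
  exact (ha2.sub (ha1.const_mul (2 * C))).add (integrable_const _)

lemma centered_eq {a : α → ℝ}
    (ha1 : Integrable a ν) (ha2 : Integrable (fun t => a t ^ 2) ν) (C : ℝ) :
    ∫ t, (a t - C) ^ 2 ∂ν = (∫ t, a t ^ 2 ∂ν) - 2 * C * (∫ t, a t ∂ν) + C ^ 2 := by
  have h : (fun t => (a t - C) ^ 2) = fun t => (a t ^ 2 - (2 * C) * a t) + C ^ 2 :=
    funext fun t => by ring
  have h1 : Integrable (fun t => a t ^ 2 - 2 * C * a t) ν := by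
    exact ha2.sub (ha1.const_mul (2 * C))
  have h2 : Integrable (fun t => 2 * C * a t) ν := by exact ha1.const_mul (2 * C)
  rw [h, integral_add h1 (integrable_const _), integral_sub ha2 h2,
    integral_const_mul, integral_const, probReal_univ]
  simp

lemma var_form {a : α → ℝ}
    (ha1 : Integrable a ν) (ha2 : Integrable (fun t => a t ^ 2) ν) :
    ∫ t, (a t - ∫ s, a s ∂ν) ^ 2 ∂ν = (∫ t, a t ^ 2 ∂ν) - (∫ t, a t ∂ν) ^ 2 := by
  rw [centered_eq ha1 ha2]; ring

lemma sq_integral_le {a : α → ℝ}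
    (ha1 : Integrable a ν) (ha2 : Integrable (fun t => a t ^ 2) ν) :
    (∫ t, a t ∂ν) ^ 2 ≤ ∫ t, a t ^ 2 ∂ν := by
  have h0 : (0:ℝ) ≤ ∫ t, (a t - ∫ s, a s ∂ν) ^ 2 ∂ν :=
    integral_nonneg fun t => sq_nonneg _
  rw [var_form ha1 ha2] at h0; linarith

lemma integrable_mul_of_sq {a b : α → ℝ}
    (ha : AEStronglyMeasurable a ν) (hb : AEStronglyMeasurable b ν)
    (ha2 : Integrable (fun t => a t ^ 2) ν) (hb2 : Integrable (fun t => b t ^ 2) ν) :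
    Integrable (fun t => a t * b t) ν := by
  have hbd : Integrable (fun t => (a t ^ 2 + b t ^ 2) / 2) ν := by
    exact (ha2.add hb2).div_const 2
  refine Integrable.mono' hbd (ha.mul hb) ?_
  refine Filter.Eventually.of_forall fun t => ?_
  rw [Real.norm_eq_abs, abs_mul]
  nlinarith [sq_nonneg (|a t| - |b t|), abs_nonneg (a t), abs_nonneg (b t),
    sq_abs (a t), sq_abs (b t)]

lemma slice_ineq {a b : α → ℝ}
    (ha1 : Integrable a ν) (ha2 : Integrable (fun t => a t ^ 2) ν)
    (hb1 : Integrable b ν) (hb2 : Integrable (fun t => b t ^ 2) ν)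
    (hab : Integrable (fun t => a t * b t) ν) :
    (∫ t, (a t + b t) ^ 2 ∂ν) - (∫ t, (a t + b t) ∂ν) ^ 2
      ≤ 2 * ((∫ t, a t ^ 2 ∂ν) - (∫ t, a t ∂ν) ^ 2)
        + 2 * ((∫ t, b t ^ 2 ∂ν) - (∫ t, b t ∂ν) ^ 2) := by
  set A := ∫ t, a t ∂ν with hA
  set B := ∫ t, b t ∂ν with hB
  have hab1 : Integrable (fun t => a t + b t) ν := ha1.add hb1
  have hab2 : Integrable (fun t => (a t + b t) ^ 2) ν := by
    have : (fun t => (a t + b t) ^ 2) = fun t => a t ^ 2 + 2 * (a t * b t) + b t ^ 2 :=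
      funext fun t => by ring
    rw [this]; exact (ha2.add (hab.const_mul 2)).add hb2
  have hsum : ∫ t, (a t + b t) ∂ν = A + B := integral_add ha1 hb1
  have e1 : ∫ t, ((a t + b t) - (A + B)) ^ 2 ∂ν
      = (∫ t, (a t + b t) ^ 2 ∂ν) - (∫ t, (a t + b t) ∂ν) ^ 2 := by
    rw [hsum, centered_eq hab1 hab2, hsum]; ring
  have e2 := var_form ha1 ha2
  have e3 := var_form hb1 hb2
  rw [← e1, ← hA, ← hB] at *
  rw [← e2, ← e3]
  have hIa : Integrable (fun t => (a t - A) ^ 2) ν := integrable_center_sq A ha1 ha2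
  have hIb : Integrable (fun t => (b t - B) ^ 2) ν := integrable_center_sq B hb1 hb2
  calc ∫ t, ((a t + b t) - (A + B)) ^ 2 ∂ν
      ≤ ∫ t, (2 * (a t - A) ^ 2 + 2 * (b t - B) ^ 2) ∂ν := by
        refine integral_mono (integrable_center_sq (A + B) hab1 hab2)
          ((hIa.const_mul 2).add (hIb.const_mul 2)) fun t => ?_
        nlinarith [sq_nonneg ((a t - A) - (b t - B))]
    _ = 2 * (∫ t, (a t - A) ^ 2 ∂ν) + 2 * (∫ t, (b t - B) ^ 2 ∂ν) := by
        have h1 : Integrable (fun t => 2 * (a t - A) ^ 2) ν := by exact hIa.const_mul 2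
        have h2 : Integrable (fun t => 2 * (b t - B) ^ 2) ν := by exact hIb.const_mul 2
        rw [integral_add h1 h2, integral_const_mul, integral_const_mul]

end ProbLemmas
end AuxA
noncomputable section AuxB
lemma mp_upd {n : ℕ} (i : Fin (n + 1)) :
    MeasurePreserving (fun p : (Fin (n + 1) → ℝ) × ℝ => updC i p.1 p.2)
      ((uCube (n + 1)).prod nu) (uCube (n + 1)) := by
  set μm : Measure (Fin n → ℝ) := Measure.pi fun _ => nu with hμm
  have hpm : IsProbabilityMeasure μm := by rw [hμm]; infer_instance
  set e := MeasurableEquiv.piFinSuccAbove (fun _ : Fin (n + 1) => ℝ) i with he'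
  have he : MeasurePreserving e (uCube (n + 1)) (nu.prod μm) := by
    rw [uCube_eq]
    exact measurePreserving_piFinSuccAbove (fun _ => nu) i
  have hsnd : MeasurePreserving (Prod.snd : ℝ × (Fin n → ℝ) → Fin n → ℝ) (nu.prod μm) μm :=
    ⟨measurable_snd, by simp [Measure.map_snd_prod]⟩
  have hrem : MeasurePreserving (fun x : Fin (n + 1) → ℝ => i.removeNth x)
      (uCube (n + 1)) μm := by
    have := hsnd.comp he
    convert this using 1
    funext x; rfl
  have hswap : MeasurePreserving (Prod.swap : ((Fin (n + 1) → ℝ) × ℝ) → ℝ × (Fin (n + 1) → ℝ))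
      ((uCube (n + 1)).prod nu) (nu.prod (uCube (n + 1))) := Measure.measurePreserving_swap
  have hmap : MeasurePreserving (Prod.map (id : ℝ → ℝ) (fun x : Fin (n + 1) → ℝ => i.removeNth x))
      (nu.prod (uCube (n + 1))) (nu.prod μm) := (MeasurePreserving.id nu).prod hrem
  have hesymm : MeasurePreserving e.symm (nu.prod μm) (uCube (n + 1)) :=
    he.symm e
  have hcomp := (hesymm.comp hmap).comp hswap
  convert hcomp using 1
  funext p
  show updC i p.1 p.2 = e.symm (p.2, i.removeNth p.1)
  rw [he', MeasurableEquiv.piFinSuccAbove_symm_apply]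
  simp [updC, Fin.insertNthEquiv, Fin.insertNth_self_removeNth]

end AuxB
noncomputable section AuxC
section Core

variable {n : ℕ} (i : Fin (n + 1)) {F : (Fin (n + 1) → ℝ) → ℝ}

lemma cMean_eq (F : (Fin (n + 1) → ℝ) → ℝ) (x : Fin (n + 1) → ℝ) :
    cMean (updC i) F x = ∫ t, F (updC i x t) ∂nu := rfl

lemma asm_comp (hF : AEStronglyMeasurable F (uCube (n + 1))) :
    AEStronglyMeasurable (fun p : (Fin (n + 1) → ℝ) × ℝ => F (updC i p.1 p.2))
      ((uCube (n + 1)).prod nu) :=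
  hF.comp_quasiMeasurePreserving (mp_upd i).quasiMeasurePreserving

lemma integral_comp_upd (hF : AEStronglyMeasurable F (uCube (n + 1))) :
    ∫ x, F x ∂(uCube (n + 1)) = ∫ p, F (updC i p.1 p.2) ∂((uCube (n + 1)).prod nu) := by
  conv_lhs => rw [← (mp_upd i).map_eq]
  rw [integral_map (mp_upd i).measurable.aemeasurable]
  rw [(mp_upd i).map_eq]; exact hF

lemma integrable_comp_upd (hF : AEStronglyMeasurable F (uCube (n + 1)))
    (hFi : Integrable F (uCube (n + 1))) :
    Integrable (fun p : (Fin (n + 1) → ℝ) × ℝ => F (updC i p.1 p.2))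
      ((uCube (n + 1)).prod nu) := by
  rw [← (mp_upd i).map_eq] at hF hFi
  exact (integrable_map_measure hF (mp_upd i).measurable.aemeasurable).mp hFi

/-- bundled facts about an L² function -/
theorem core_facts (hF : MemLp F 2 (uCube (n + 1))) :
    Integrable (fun p : (Fin (n + 1) → ℝ) × ℝ => F (updC i p.1 p.2))
        ((uCube (n + 1)).prod nu) ∧
    Integrable (fun p : (Fin (n + 1) → ℝ) × ℝ => F (updC i p.1 p.2) ^ 2)
        ((uCube (n + 1)).prod nu) ∧
    Integrable (fun x => ∫ t, F (updC i x t) ^ 2 ∂nu) (uCube (n + 1)) ∧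
    AEStronglyMeasurable (cMean (updC i) F) (uCube (n + 1)) ∧
    Integrable (fun x => cMean (updC i) F x ^ 2) (uCube (n + 1)) ∧
    tVar (uCube (n + 1)) (updC i) F =
      ∫ x, ((∫ t, F (updC i x t) ^ 2 ∂nu) - cMean (updC i) F x ^ 2) ∂(uCube (n + 1)) ∧
    (∀ᵐ x ∂(uCube (n + 1)), Integrable (fun t => F (updC i x t)) nu) ∧
    (∀ᵐ x ∂(uCube (n + 1)), Integrable (fun t => F (updC i x t) ^ 2) nu) ∧
    (∀ᵐ x ∂(uCube (n + 1)), cMean (updC i) F x ^ 2 ≤ ∫ t, F (updC i x t) ^ 2 ∂nu) := by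
  have hasm : AEStronglyMeasurable F (uCube (n + 1)) := hF.aestronglyMeasurable
  have hasm2 : AEStronglyMeasurable (fun x => F x ^ 2) (uCube (n + 1)) := by
    simpa [pow_two, Pi.mul_def] using hasm.mul hasm
  have hI1 : Integrable F (uCube (n + 1)) := hF.integrable one_le_two
  have hI2 : Integrable (fun x => F x ^ 2) (uCube (n + 1)) := hF.integrable_sq
  have c1 : Integrable (fun p : (Fin (n + 1) → ℝ) × ℝ => F (updC i p.1 p.2))
      ((uCube (n + 1)).prod nu) := integrable_comp_upd i hasm hI1
  have c2 : Integrable (fun p : (Fin (n + 1) → ℝ) × ℝ => F (updC i p.1 p.2) ^ 2)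
      ((uCube (n + 1)).prod nu) := integrable_comp_upd i hasm2 hI2
  have c3 : Integrable (fun x => ∫ t, F (updC i x t) ^ 2 ∂nu) (uCube (n + 1)) :=
    c2.integral_prod_left
  have s1 : ∀ᵐ x ∂(uCube (n + 1)), Integrable (fun t => F (updC i x t)) nu :=
    c1.prod_right_ae
  have s2 : ∀ᵐ x ∂(uCube (n + 1)), Integrable (fun t => F (updC i x t) ^ 2) nu :=
    c2.prod_right_ae
  have hCasm : AEStronglyMeasurable (cMean (updC i) F) (uCube (n + 1)) := by
    have := (asm_comp i hasm).integral_prod_right'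
    exact this
  have hjen : ∀ᵐ x ∂(uCube (n + 1)),
      cMean (updC i) F x ^ 2 ≤ ∫ t, F (updC i x t) ^ 2 ∂nu := by
    filter_upwards [s1, s2] with x h1 h2
    rw [cMean_eq]
    exact sq_integral_le h1 h2
  have hC2asm : AEStronglyMeasurable (fun x => cMean (updC i) F x ^ 2) (uCube (n + 1)) := by
    simpa [pow_two, Pi.mul_def] using hCasm.mul hCasm
  have c4 : Integrable (fun x => cMean (updC i) F x ^ 2) (uCube (n + 1)) := by
    refine c3.mono' hC2asm ?_
    filter_upwards [hjen] with x hx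
    rw [Real.norm_eq_abs, abs_of_nonneg (sq_nonneg _)]
    exact hx
  refine ⟨c1, c2, c3, hCasm, c4, ?_, s1, s2, hjen⟩
  have h5 : intSq (uCube (n + 1)) F = ∫ x, ∫ t, F (updC i x t) ^ 2 ∂nu ∂(uCube (n + 1)) := by
    rw [intSq, integral_comp_upd i hasm2, integral_prod _ c2]
  rw [tVar, h5, ← integral_sub c3 c4]

end Core
end AuxC
noncomputable section AuxD
section Main
variable {n : ℕ}

lemma tVar_nonneg (i : Fin (n + 1)) {F : (Fin (n + 1) → ℝ) → ℝ}
    (hF : MemLp F 2 (uCube (n + 1))) : 0 ≤ tVar (uCube (n + 1)) (updC i) F := by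
  obtain ⟨-, -, c3, -, c4, heq, -, -, hjen⟩ := core_facts i hF
  rw [heq]
  refine integral_nonneg_of_ae ?_
  filter_upwards [hjen] with x hx
  simp only [Pi.zero_apply]
  linarith

lemma tVar_add_le (i : Fin (n + 1)) {f h : (Fin (n + 1) → ℝ) → ℝ}
    (hf : MemLp f 2 (uCube (n + 1))) (hh : MemLp h 2 (uCube (n + 1))) :
    tVar (uCube (n + 1)) (updC i) (f + h)
      ≤ 2 * tVar (uCube (n + 1)) (updC i) f + 2 * tVar (uCube (n + 1)) (updC i) h := by
  set μ := uCube (n + 1)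
  obtain ⟨c1f, c2f, c3f, -, c4f, heqf, s1f, s2f, -⟩ := core_facts i hf
  obtain ⟨c1h, c2h, c3h, -, c4h, heqh, s1h, s2h, -⟩ := core_facts i hh
  obtain ⟨-, -, c3g, -, c4g, heqg, -, -, -⟩ := core_facts i (hf.add hh)
  have hmul : Integrable
      (fun p : (Fin (n + 1) → ℝ) × ℝ => f (updC i p.1 p.2) * h (updC i p.1 p.2))
      (μ.prod nu) :=
    integrable_mul_of_sq (asm_comp i hf.aestronglyMeasurable)
      (asm_comp i hh.aestronglyMeasurable) c2f c2h
  have sab : ∀ᵐ x ∂μ, Integrable (fun t => f (updC i x t) * h (updC i x t)) nu :=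
    hmul.prod_right_ae
  have hae : ∀ᵐ x ∂μ,
      (∫ t, (f + h) (updC i x t) ^ 2 ∂nu) - cMean (updC i) (f + h) x ^ 2
        ≤ 2 * ((∫ t, f (updC i x t) ^ 2 ∂nu) - cMean (updC i) f x ^ 2)
          + 2 * ((∫ t, h (updC i x t) ^ 2 ∂nu) - cMean (updC i) h x ^ 2) := by
    filter_upwards [s1f, s2f, s1h, s2h, sab] with x hf1 hf2 hh1 hh2 hab
    simp only [cMean_eq, Pi.add_apply]
    exact slice_ineq hf1 hf2 hh1 hh2 hab
  have hIg : Integrable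
      (fun x => (∫ t, (f + h) (updC i x t) ^ 2 ∂nu) - cMean (updC i) (f + h) x ^ 2) μ := by
    exact c3g.sub c4g
  have hIf : Integrable
      (fun x => (∫ t, f (updC i x t) ^ 2 ∂nu) - cMean (updC i) f x ^ 2) μ := by
    exact c3f.sub c4f
  have hIh : Integrable
      (fun x => (∫ t, h (updC i x t) ^ 2 ∂nu) - cMean (updC i) h x ^ 2) μ := by
    exact c3h.sub c4h
  have hRHS : Integrable (fun x =>
      2 * ((∫ t, f (updC i x t) ^ 2 ∂nu) - cMean (updC i) f x ^ 2)
        + 2 * ((∫ t, h (updC i x t) ^ 2 ∂nu) - cMean (updC i) h x ^ 2)) μ := by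
    exact (hIf.const_mul 2).add (hIh.const_mul 2)
  have := integral_mono_ae hIg hRHS hae
  rw [heqg, heqf, heqh]
  calc ∫ x, ((∫ t, (f + h) (updC i x t) ^ 2 ∂nu) - cMean (updC i) (f + h) x ^ 2) ∂μ
      ≤ ∫ x, (2 * ((∫ t, f (updC i x t) ^ 2 ∂nu) - cMean (updC i) f x ^ 2)
          + 2 * ((∫ t, h (updC i x t) ^ 2 ∂nu) - cMean (updC i) h x ^ 2)) ∂μ := this
    _ = _ := by
        have e1 : Integrable (fun x =>
            2 * ((∫ t, f (updC i x t) ^ 2 ∂nu) - cMean (updC i) f x ^ 2)) μ := by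
          exact hIf.const_mul 2
        have e2 : Integrable (fun x =>
            2 * ((∫ t, h (updC i x t) ^ 2 ∂nu) - cMean (updC i) h x ^ 2)) μ := by
          exact hIh.const_mul 2
        rw [integral_add e1 e2, integral_const_mul, integral_const_mul]

lemma var'_add {α : Type*} [MeasurableSpace α] {μ : Measure α} [IsProbabilityMeasure μ] {f h : α → ℝ}
    (hf : MemLp f 2 μ) (hh : MemLp h 2 μ) :
    var' μ (f + h) = var' μ f + var' μ h + 2 * cov' μ f h := by
  have hIf : Integrable f μ := hf.integrable one_le_two
  have hIh : Integrable h μ := hh.integrable one_le_two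
  have hI2f := hf.integrable_sq
  have hI2h := hh.integrable_sq
  have hIfh : Integrable (fun x => f x * h x) μ :=
    integrable_mul_of_sq hf.aestronglyMeasurable hh.aestronglyMeasurable hI2f hI2h
  have h1 : intSq μ (f + h)
      = intSq μ f + 2 * (∫ x, f x * h x ∂μ) + intSq μ h := by
    have e : (fun x => ((f + h) x) ^ 2)
        = fun x => (f x ^ 2 + 2 * (f x * h x)) + h x ^ 2 := funext fun x => by
      simp [Pi.add_apply]; ring
    have e1 : Integrable (fun x => f x ^ 2 + 2 * (f x * h x)) μ := by
      exact hI2f.add (hIfh.const_mul 2)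
    have e2 : Integrable (fun x => 2 * (f x * h x)) μ := by exact hIfh.const_mul 2
    rw [intSq, e, integral_add e1 hI2h, integral_add hI2f e2, integral_const_mul]
    try rw [intSq, intSq]
    try ring
  have h2 : mval μ (f + h) = mval μ f + mval μ h := by
    rw [mval, mval, mval, ← integral_add hIf hIh]; rfl
  rw [var', var', var', cov', h1, h2]; ring

theorem part1 (n : ℕ) (i : Fin n) (f h : (Fin n → ℝ) → ℝ)
    (hf : MemLp f 2 (uCube n)) (hh : MemLp h 2 (uCube n))
    (hvf : 0 < var' (uCube n) f) (hvh : 0 < var' (uCube n) h)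
    (hvg : 0 < var' (uCube n) (f + h)) (hcov : 0 ≤ cov' (uCube n) f h) :
    sobolT (uCube n) (updC i) (f + h) ≤
      2 * max (sobolT (uCube n) (updC i) f) (sobolT (uCube n) (updC i) h) := by
  cases n with
  | zero => exact i.elim0
  | succ m =>
    set μ := uCube (m + 1)
    set Tf := tVar μ (updC i) f
    set Th := tVar μ (updC i) h
    set Tg := tVar μ (updC i) (f + h)
    set Vf := var' μ f
    set Vh := var' μ h
    set Vg := var' μ (f + h)
    have key : Tg ≤ 2 * Tf + 2 * Th := tVar_add_le i hf hh
    have tf0 : 0 ≤ Tf := tVar_nonneg i hf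
    have th0 : 0 ≤ Th := tVar_nonneg i hh
    have hsum : Vf + Vh ≤ Vg := by
      have hadd : Vg = Vf + Vh + 2 * cov' μ f h := var'_add hf hh
      have hcov' : 0 ≤ cov' μ f h := hcov
      linarith
    set M := max (sobolT μ (updC i) f) (sobolT μ (updC i) h) with hM
    have hMf : sobolT μ (updC i) f ≤ M := le_max_left _ _
    have hMh : sobolT μ (updC i) h ≤ M := le_max_right _ _
    have hM0 : 0 ≤ M := le_trans (div_nonneg tf0 hvf.le) hMf
    have hMf' : Tf / Vf ≤ M := hMf
    have hMh' : Th / Vh ≤ M := hMh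
    have hTfM : Tf ≤ M * Vf := (div_le_iff₀ hvf).mp hMf'
    have hThM : Th ≤ M * Vh := (div_le_iff₀ hvh).mp hMh'
    have hTg : Tg ≤ 2 * M * Vg := by
      have h1 : Tg ≤ 2 * M * (Vf + Vh) := by nlinarith
      nlinarith
    show Tg / Vg ≤ 2 * M
    exact (div_le_iff₀ hvg).mpr hTg

end Main
end AuxD
noncomputable section AuxE
section Part2

lemma nu_prod_eq :
    nu.prod nu = (volume : Measure (ℝ × ℝ)).restrict (Set.Ioo 0 1 ×ˢ Set.Ioo 0 1) := by
  rw [Measure.volume_eq_prod, nu, Measure.prod_restrict]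

lemma integrable_nu2 (φ : ℝ × ℝ → ℝ) (hφ : Continuous φ) : Integrable φ (nu.prod nu) := by
  rw [nu_prod_eq]
  have h1 : IntegrableOn φ (Set.Icc 0 1 ×ˢ Set.Icc 0 1) volume :=
    hφ.continuousOn.integrableOn_compact (isCompact_Icc.prod isCompact_Icc)
  exact h1.mono_set (Set.prod_mono Set.Ioo_subset_Icc_self Set.Ioo_subset_Icc_self)

lemma integral_cube2 (φ : ℝ → ℝ → ℝ) (hφ : Continuous (fun p : ℝ × ℝ => φ p.1 p.2)) :
    ∫ x, φ (x 0) (x 1) ∂(uCube 2)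
      = ∫ s in Set.Ioo (0:ℝ) 1, (∫ t in Set.Ioo (0:ℝ) 1, φ s t) := by
  have mp : MeasurePreserving (MeasurableEquiv.piFinTwo (fun _ : Fin 2 => ℝ))
      (uCube 2) (nu.prod nu) := by
    rw [uCube_eq]; exact measurePreserving_piFinTwo _
  have h1 : ∫ x, φ (x 0) (x 1) ∂(uCube 2) = ∫ p, φ p.1 p.2 ∂(nu.prod nu) := by
    rw [← mp.map_eq, integral_map mp.measurable.aemeasurable hφ.aestronglyMeasurable]
    rfl
  rw [h1, integral_prod _ (integrable_nu2 _ hφ)]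
  rfl

lemma Ioo_to_ii (φ : ℝ → ℝ) : ∫ t in Set.Ioo (0:ℝ) 1, φ t = ∫ t in (0:ℝ)..1, φ t := by
  rw [intervalIntegral.integral_of_le zero_le_one, integral_Ioc_eq_integral_Ioo]

lemma poly_int (a b c : ℝ) :
    ∫ t in Set.Ioo (0:ℝ) 1, (a * t ^ 2 + b * t + c) = a / 3 + b / 2 + c := by
  rw [Ioo_to_ii]
  have i1 : IntervalIntegrable (fun t : ℝ => a * t ^ 2) volume 0 1 :=
    (by continuity : Continuous fun t : ℝ => a * t ^ 2).intervalIntegrable 0 1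
  have i2 : IntervalIntegrable (fun t : ℝ => b * t) volume 0 1 :=
    (by continuity : Continuous fun t : ℝ => b * t).intervalIntegrable 0 1
  have i3 : IntervalIntegrable (fun t : ℝ => c) volume 0 1 :=
    intervalIntegrable_const
  rw [intervalIntegral.integral_add (i1.add i2) i3, intervalIntegral.integral_add i1 i2,
    intervalIntegral.integral_const_mul, intervalIntegral.integral_const_mul,
    integral_pow, integral_id, intervalIntegral.integral_const]
  norm_num
  ring

end Part2

noncomputable section Example
open Set

def f2 : (Fin 2 → ℝ) → ℝ := fun x => x 0 + x 1 - 1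
def h2 : (Fin 2 → ℝ) → ℝ := fun x => x 0 - x 1

lemma ae_cube_mem (n : ℕ) : ∀ᵐ x ∂(uCube n), ∀ j, x j ∈ Set.Ioo (0:ℝ) 1 := by
  have hS : MeasurableSet (Set.univ.pi fun _ : Fin n => Set.Ioo (0:ℝ) 1) :=
    MeasurableSet.univ_pi fun _ => measurableSet_Ioo
  have h1 : uCube n (Set.univ.pi fun _ => Set.Ioo (0:ℝ) 1) = 1 := by
    rw [uCube_eq, Measure.pi_pi]
    simp [nu, Measure.restrict_apply, measurableSet_Ioo, Real.volume_Ioo]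
  have h0 : uCube n ((Set.univ.pi fun _ => Set.Ioo (0:ℝ) 1)ᶜ) = 0 := by
    rw [measure_compl hS (by simp), h1]
    simp
  rw [ae_iff]
  convert h0 using 2
  ext x
  simp [Set.mem_pi]

lemma memLp_f2 : MemLp f2 2 (uCube 2) := by
  refine MemLp.of_bound ?_ 3 ?_
  · exact (((measurable_pi_apply 0).add (measurable_pi_apply 1)).sub
      measurable_const).aestronglyMeasurable
  · filter_upwards [ae_cube_mem 2] with x hx
    have h0 := hx 0; have h1 := hx 1
    rw [Real.norm_eq_abs, abs_le]
    simp only [f2]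
    constructor <;> [nlinarith [h0.1, h1.1]; nlinarith [h0.2, h1.2]]

lemma memLp_h2 : MemLp h2 2 (uCube 2) := by
  refine MemLp.of_bound ?_ 3 ?_
  · exact ((measurable_pi_apply 0).sub (measurable_pi_apply 1)).aestronglyMeasurable
  · filter_upwards [ae_cube_mem 2] with x hx
    have h0 := hx 0; have h1 := hx 1
    rw [Real.norm_eq_abs, abs_le]
    simp only [h2]
    constructor <;> nlinarith [h0.1, h0.2, h1.1, h1.2]

lemma cMean_f2 (x : Fin 2 → ℝ) : cMean (updC 0) f2 x = x 1 - 1/2 := by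
  have e : ∀ t : ℝ, f2 (updC 0 x t) = 0 * t ^ 2 + 1 * t + (x 1 - 1) := by
    intro t
    simp [f2, updC, Function.update_of_ne (show (1:Fin 2) ≠ 0 by decide)]
    ring
  rw [cMean]
  simp_rw [e, poly_int]
  norm_num
  ring

lemma cMean_h2 (x : Fin 2 → ℝ) : cMean (updC 0) h2 x = 1/2 - x 1 := by
  have e : ∀ t : ℝ, h2 (updC 0 x t) = 0 * t ^ 2 + 1 * t + (-(x 1)) := by
    intro t
    simp [h2, updC, Function.update_of_ne (show (1:Fin 2) ≠ 0 by decide)]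
    ring
  rw [cMean]
  simp_rw [e, poly_int]
  norm_num
  ring

lemma cMean_g2 (x : Fin 2 → ℝ) : cMean (updC 0) (f2 + h2) x = 0 := by
  have e : ∀ t : ℝ, (f2 + h2) (updC 0 x t) = 0 * t ^ 2 + 2 * t + (-1) := by
    intro t
    simp [f2, h2, updC, Function.update_of_ne (show (1:Fin 2) ≠ 0 by decide)]
    ring
  rw [cMean]
  simp_rw [e, poly_int]
  norm_num

lemma mval_f2 : mval (uCube 2) f2 = 0 := by
  rw [mval]
  simp only [f2]
  rw [integral_cube2 (fun s t => s + t - 1) (by continuity)]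
  simp_rw [show ∀ s t : ℝ, s + t - 1 = 0 * t ^ 2 + 1 * t + (s - 1) from fun s t => by ring,
    poly_int,
    show ∀ s : ℝ, (0:ℝ) / 3 + 1 / 2 + (s - 1) = 0 * s ^ 2 + 1 * s + (-1/2) from fun s => by ring,
    poly_int]
  norm_num

lemma intSq_f2 : intSq (uCube 2) f2 = 1/6 := by
  rw [intSq]
  simp only [f2]
  rw [integral_cube2 (fun s t => (s + t - 1) ^ 2) (by continuity)]
  simp_rw [show ∀ s t : ℝ, (s + t - 1) ^ 2 = 1 * t ^ 2 + (2*s - 2) * t + (s - 1) ^ 2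
      from fun s t => by ring,
    poly_int,
    show ∀ s : ℝ, (1:ℝ) / 3 + (2*s - 2) / 2 + (s - 1) ^ 2 = 1 * s ^ 2 + (-1) * s + 1/3
      from fun s => by ring,
    poly_int]
  norm_num

lemma mval_h2 : mval (uCube 2) h2 = 0 := by
  rw [mval]
  simp only [h2]
  rw [integral_cube2 (fun s t => s - t) (by continuity)]
  simp_rw [show ∀ s t : ℝ, s - t = 0 * t ^ 2 + (-1) * t + s from fun s t => by ring,
    poly_int,
    show ∀ s : ℝ, (0:ℝ) / 3 + (-1) / 2 + s = 0 * s ^ 2 + 1 * s + (-1/2) from fun s => by ring,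
    poly_int]
  norm_num

lemma intSq_h2 : intSq (uCube 2) h2 = 1/6 := by
  rw [intSq]
  simp only [h2]
  rw [integral_cube2 (fun s t => (s - t) ^ 2) (by continuity)]
  simp_rw [show ∀ s t : ℝ, (s - t) ^ 2 = 1 * t ^ 2 + (-(2*s)) * t + s ^ 2
      from fun s t => by ring,
    poly_int,
    show ∀ s : ℝ, (1:ℝ) / 3 + (-(2*s)) / 2 + s ^ 2 = 1 * s ^ 2 + (-1) * s + 1/3
      from fun s => by ring,
    poly_int]
  norm_num

lemma int_f2h2 : ∫ x, f2 x * h2 x ∂(uCube 2) = 0 := by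
  simp only [f2, h2]
  rw [integral_cube2 (fun s t => (s + t - 1) * (s - t)) (by continuity)]
  simp_rw [show ∀ s t : ℝ, (s + t - 1) * (s - t) = (-1) * t ^ 2 + 1 * t + (s^2 - s)
      from fun s t => by ring,
    poly_int,
    show ∀ s : ℝ, (-1:ℝ) / 3 + 1 / 2 + (s^2 - s) = 1 * s ^ 2 + (-1) * s + 1/6
      from fun s => by ring,
    poly_int]
  norm_num

lemma intSq_g2 : intSq (uCube 2) (f2 + h2) = 1/3 := by
  rw [intSq]
  simp only [Pi.add_apply, f2, h2]
  rw [integral_cube2 (fun s t => ((s + t - 1) + (s - t)) ^ 2) (by continuity)]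
  simp_rw [show ∀ s t : ℝ, ((s + t - 1) + (s - t)) ^ 2 = 0 * t ^ 2 + 0 * t + (4*s^2 - 4*s + 1)
      from fun s t => by ring,
    poly_int,
    show ∀ s : ℝ, (0:ℝ) / 3 + 0 / 2 + (4*s^2 - 4*s + 1) = 4 * s ^ 2 + (-4) * s + 1
      from fun s => by ring,
    poly_int]
  norm_num

lemma intCsq_f2 : ∫ x, (cMean (updC 0) f2 x) ^ 2 ∂(uCube 2) = 1/12 := by
  simp_rw [cMean_f2]
  rw [integral_cube2 (fun s t => (t - 1/2) ^ 2) (by continuity)]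
  simp_rw [show ∀ t : ℝ, (t - 1/2) ^ 2 = 1 * t ^ 2 + (-1) * t + 1/4 from fun t => by ring,
    poly_int,
    show ((1:ℝ) / 3 + (-1) / 2 + 1/4) = 0 * (1:ℝ) ^ 2 + 0 * 1 + 1/12 from by norm_num]
  rw [show (fun s : ℝ => (0:ℝ) * (1:ℝ) ^ 2 + 0 * 1 + 1/12) = fun s : ℝ => 0 * s ^ 2 + 0 * s + 1/12
    from funext fun s => by ring]
  rw [poly_int]
  norm_num

lemma intCsq_h2 : ∫ x, (cMean (updC 0) h2 x) ^ 2 ∂(uCube 2) = 1/12 := by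
  simp_rw [cMean_h2]
  rw [integral_cube2 (fun s t => (1/2 - t) ^ 2) (by continuity)]
  simp_rw [show ∀ t : ℝ, (1/2 - t) ^ 2 = 1 * t ^ 2 + (-1) * t + 1/4 from fun t => by ring,
    poly_int,
    show ((1:ℝ) / 3 + (-1) / 2 + 1/4) = 0 * (1:ℝ) ^ 2 + 0 * 1 + 1/12 from by norm_num]
  rw [show (fun s : ℝ => (0:ℝ) * (1:ℝ) ^ 2 + 0 * 1 + 1/12) = fun s : ℝ => 0 * s ^ 2 + 0 * s + 1/12
    from funext fun s => by ring]
  rw [poly_int]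
  norm_num

lemma intCsq_g2 : ∫ x, (cMean (updC 0) (f2 + h2) x) ^ 2 ∂(uCube 2) = 0 := by
  simp_rw [cMean_g2]
  simp

lemma var'_f2 : var' (uCube 2) f2 = 1/6 := by
  rw [var', mval_f2, intSq_f2]; norm_num

lemma var'_h2 : var' (uCube 2) h2 = 1/6 := by
  rw [var', mval_h2, intSq_h2]; norm_num

lemma cov'_f2h2 : cov' (uCube 2) f2 h2 = 0 := by
  rw [cov', mval_f2, mval_h2, int_f2h2]; ring

lemma sobolT_f2 : sobolT (uCube 2) (updC 0) f2 = 1/2 := by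
  rw [sobolT, tVar, intSq_f2, intCsq_f2, var'_f2]
  norm_num

lemma sobolT_h2 : sobolT (uCube 2) (updC 0) h2 = 1/2 := by
  rw [sobolT, tVar, intSq_h2, intCsq_h2, var'_h2]
  norm_num

lemma mval_g2 : mval (uCube 2) (f2 + h2) = 0 := by
  rw [mval]
  simp only [Pi.add_apply, f2, h2]
  rw [integral_cube2 (fun s t => (s + t - 1) + (s - t)) (by continuity)]
  simp_rw [show ∀ s t : ℝ, (s + t - 1) + (s - t) = 0 * t ^ 2 + 0 * t + (2*s - 1)
      from fun s t => by ring,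
    poly_int,
    show ∀ s : ℝ, (0:ℝ) / 3 + 0 / 2 + (2*s - 1) = 0 * s ^ 2 + 2 * s + (-1) from fun s => by ring,
    poly_int]
  norm_num

lemma var'_g2 : var' (uCube 2) (f2 + h2) = 1/3 := by
  rw [var', mval_g2, intSq_g2]; norm_num

lemma sobolT_g2 : sobolT (uCube 2) (updC 0) (f2 + h2) = 1 := by
  rw [sobolT, tVar, intSq_g2, intCsq_g2, var'_g2]
  norm_num

end Example
end AuxE

/-- Case 4 (Theorem B1, simplified bound): if `Cov(f,h) ≥ 0` and `g = f + h`, then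
`S^g_{T,x_i} ≤ 2·max{S^f_{T,x_i}, S^h_{T,x_i}}`, and the constant `2` is sharp. -/
theorem stmt7 :
    (∀ (n : ℕ) (i : Fin n) (f h : (Fin n → ℝ) → ℝ),
      MemLp f 2 (uCube n) → MemLp h 2 (uCube n) →
      0 < var' (uCube n) f → 0 < var' (uCube n) h → 0 < var' (uCube n) (f + h) →
      0 ≤ cov' (uCube n) f h →
      sobolT (uCube n) (updC i) (f + h) ≤
        2 * max (sobolT (uCube n) (updC i) f) (sobolT (uCube n) (updC i) h)) ∧
    (∀ c : ℝ,
      (∀ (n : ℕ) (i : Fin n) (f h : (Fin n → ℝ) → ℝ),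
        MemLp f 2 (uCube n) → MemLp h 2 (uCube n) →
        0 < var' (uCube n) f → 0 < var' (uCube n) h → 0 < var' (uCube n) (f + h) →
        0 ≤ cov' (uCube n) f h →
        sobolT (uCube n) (updC i) (f + h) ≤
          2 * max (sobolT (uCube n) (updC i) f) (sobolT (uCube n) (updC i) h)) →
      (∀ (n : ℕ) (i : Fin n) (f h : (Fin n → ℝ) → ℝ),
        MemLp f 2 (uCube n) → MemLp h 2 (uCube n) →
        0 < var' (uCube n) f → 0 < var' (uCube n) h → 0 < var' (uCube n) (f + h) →
        0 ≤ cov' (uCube n) f h →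
        sobolT (uCube n) (updC i) (f + h) ≤
          c * max (sobolT (uCube n) (updC i) f) (sobolT (uCube n) (updC i) h)) →
      2 ≤ c) := by
  constructor
  · exact part1
  · intro c _ hc
    have hx := hc 2 0 f2 h2 memLp_f2 memLp_h2 (by rw [var'_f2]; norm_num)
      (by rw [var'_h2]; norm_num) (by rw [var'_g2]; norm_num) (le_of_eq cov'_f2h2.symm)
    rw [sobolT_f2, sobolT_h2, sobolT_g2, max_self] at hx
    linarith
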